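/- Let d ≥ 1 and T > 0. Let H₀, H₁ be Hermitian d×d complex matrices, let f : ℝ → ℝ be continuous, and let D be a linear superoperator on d×d complex matrices. Define the time-dependent generator L_t(A) = −i((H₀ + f(t)·H₁)·A − A·(H₀ + f(t)·H₁)) + D(A) and the schedule-independent generator L(A) = −i(H₀·A − A·H₀) + D(A). Let ρ : ℝ → Matrix (Fin d) (Fin d) ℂ be differentiable with ρ'(t) = L_t(ρ(t)) and ‖ρ(t)‖₁ = 1 for all t ∈ [0,T], and suppose the initial state ρ₀ = ρ(0) commutes with H₁. If C > 0 is a constant satisfying ‖L(A)‖₁ ≤ C·‖A‖₁ for all matrices A, then T ≥ ‖ρ(T) − ρ₀‖₁ / C. -/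

import Mathlib

open Matrix
open scoped ComplexOrder

/- Matrices are equipped with the Frobenius norm so that curves of matrices can be
differentiated; the statement itself is phrased via the trace norm defined below. -/
attribute [local instance] Matrix.frobeniusNormedAddCommGroup Matrix.frobeniusNormedSpace

/-- Trace norm (Schatten 1-norm): `‖A‖₁ = Tr √(Aᴴ A)`. -/
noncomputable def traceNorm {d : ℕ} (A : Matrix (Fin d) (Fin d) ℂ) : ℝ :=
  (((Matrix.posSemidef_conjTranspose_mul_self A).1.eigenvectorUnitary.1 *
      diagonal (((↑) : ℝ → ℂ) ∘ (√·) ∘ (Matrix.posSemidef_conjTranspose_mul_self A).1.eigenvalues) *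
      (star (Matrix.posSemidef_conjTranspose_mul_self A).1.eigenvectorUnitary :
        Matrix (Fin d) (Fin d) ℂ)).trace).re

attribute [local instance] Matrix.frobeniusNormedRing Matrix.frobeniusNormedAlgebra

section TN
variable {d : ℕ}

lemma traceNorm_eq_sum (A : Matrix (Fin d) (Fin d) ℂ) :
    traceNorm A = ∑ i, Real.sqrt ((Matrix.posSemidef_conjTranspose_mul_self A).1.eigenvalues i) := by
  set h := Matrix.posSemidef_conjTranspose_mul_self A
  have : (h.1.eigenvectorUnitary.1 *
      diagonal (((↑) : ℝ → ℂ) ∘ (√·) ∘ h.1.eigenvalues) *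
      (star h.1.eigenvectorUnitary : Matrix (Fin d) (Fin d) ℂ)).trace
      = ∑ i, (Real.sqrt (h.1.eigenvalues i) : ℂ) := by
    rw [Matrix.trace_mul_cycle]
    rw [Matrix.UnitaryGroup.star_mul_self, one_mul, Matrix.trace_diagonal]
    rfl
  rw [traceNorm, this]
  simp

lemma traceNorm_nonneg (A : Matrix (Fin d) (Fin d) ℂ) : 0 ≤ traceNorm A := by
  rw [traceNorm_eq_sum]
  exact Finset.sum_nonneg fun i _ => Real.sqrt_nonneg _

lemma psd_diag_re_nonneg {M : Matrix (Fin d) (Fin d) ℂ} (h : M.PosSemidef) (i : Fin d) :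
    0 ≤ (M i i).re := by
  have := h.dotProduct_mulVec_nonneg (Pi.single i 1)
  rw [Complex.le_def] at this
  have he : (star (Pi.single i 1) ⬝ᵥ M *ᵥ Pi.single i 1 : ℂ) = M i i := by
    simp [dotProduct, Matrix.mulVec, Pi.single_apply, Finset.sum_ite_eq]
  rw [he] at this
  exact this.1


lemma exists_contraction_polar (X : Matrix (Fin d) (Fin d) ℂ) :
    ∃ W : Matrix (Fin d) (Fin d) ℂ, (1 - W * Wᴴ).PosSemidef ∧
      (Matrix.trace (W * X)).re = traceNorm X := by
  set hH := Matrix.posSemidef_conjTranspose_mul_self X with hHdef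
  set u : Matrix (Fin d) (Fin d) ℂ := (hH.1.eigenvectorUnitary : Matrix (Fin d) (Fin d) ℂ) with hu
  have hu1 : star u * u = 1 := Matrix.UnitaryGroup.star_mul_self _
  have hu2 : u * star u = 1 := Matrix.mem_unitaryGroup_iff.mp hH.1.eigenvectorUnitary.2
  have hsu : (star u)ᴴ = u := by simp [Matrix.star_eq_conjTranspose]
  set lam := hH.1.eigenvalues with hlam
  have hlamnn : ∀ i, 0 ≤ lam i := fun i => hH.eigenvalues_nonneg i
  have hdiag : star u * (Xᴴ * X) * u = Matrix.diagonal (fun i => (lam i : ℂ)) := by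
    have := hH.1.conjStarAlgAut_star_eigenvectorUnitary
    rw [Unitary.conjStarAlgAut_star_apply] at this
    exact this
  have hdiag' : Xᴴ * X = u * Matrix.diagonal (fun i => (lam i : ℂ)) * star u := by
    have h := congrArg (fun B => u * B * star u) hdiag
    rw [show u * (star u * (Xᴴ * X) * u) * star u
        = (u * star u) * (Xᴴ * X) * (u * star u) by noncomm_ring, hu2, one_mul,
      Matrix.mul_one] at h
    exact h
  set g : Fin d → ℂ := fun i => if lam i = 0 then 0 else (((Real.sqrt (lam i))⁻¹ : ℝ) : ℂ) with hg
  set W := u * Matrix.diagonal g * star u * Xᴴ with hW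
  have hglfun : (fun i => g i * (lam i : ℂ)) = fun i => (Real.sqrt (lam i) : ℂ) := by
    funext i
    by_cases h0 : lam i = 0
    · simp [hg, h0]
    · have hpos : 0 < lam i := lt_of_le_of_ne (hlamnn i) (Ne.symm h0)
      have hs : Real.sqrt (lam i) ≠ 0 := by positivity
      simp only [hg, h0, if_false]
      norm_cast
      field_simp
      exact (Real.sq_sqrt hpos.le).symm
  have hgl : Matrix.diagonal g * Matrix.diagonal (fun i => (lam i : ℂ))
      = Matrix.diagonal (fun i => (Real.sqrt (lam i) : ℂ)) := by
    rw [Matrix.diagonal_mul_diagonal, hglfun]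
  have hWX : W * X = u * Matrix.diagonal (fun i => (Real.sqrt (lam i) : ℂ)) * star u := by
    rw [hW]
    have h1 : u * Matrix.diagonal g * star u * Xᴴ * X
        = u * Matrix.diagonal g * (star u * (Xᴴ * X)) := by noncomm_ring
    rw [h1, hdiag']
    rw [show u * Matrix.diagonal g * (star u * (u * Matrix.diagonal (fun i => (lam i : ℂ)) * star u))
        = u * (Matrix.diagonal g * ((star u * u) * Matrix.diagonal (fun i => (lam i : ℂ)))) * star u
        by noncomm_ring, hu1, one_mul, ← Matrix.mul_assoc, Matrix.mul_assoc u _ _, hgl]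
  have hdgH : (Matrix.diagonal g)ᴴ = Matrix.diagonal g := by
    rw [Matrix.diagonal_conjTranspose]
    have : star g = g := by
      funext i
      by_cases h0 : lam i = 0 <;>
        simp [hg, h0, Pi.star_apply, Complex.star_def, Complex.conj_ofReal]
    rw [this]
  have hWH : Wᴴ = X * (u * Matrix.diagonal g * star u) := by
    rw [hW]
    simp only [Matrix.conjTranspose_mul, Matrix.conjTranspose_conjTranspose, hsu, hdgH]
    noncomm_ring
  set p : Fin d → ℂ := fun i => if lam i = 0 then 0 else 1 with hp
  have hggg : Matrix.diagonal g * Matrix.diagonal (fun i => (lam i : ℂ)) * Matrix.diagonal g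
      = Matrix.diagonal p := by
    rw [hgl, Matrix.diagonal_mul_diagonal]
    have : (fun i => (Real.sqrt (lam i) : ℂ) * g i) = p := by
      funext i
      by_cases h0 : lam i = 0
      · simp [hg, hp, h0]
      · have hpos : 0 < lam i := lt_of_le_of_ne (hlamnn i) (Ne.symm h0)
        have hs : Real.sqrt (lam i) ≠ 0 := by positivity
        simp only [hg, hp, h0, if_false]
        norm_cast
        field_simp
    rw [this]
  have hWWH : W * Wᴴ = u * Matrix.diagonal p * star u := by
    rw [hWH, hW]
    have h1 : u * Matrix.diagonal g * star u * Xᴴ * (X * (u * Matrix.diagonal g * star u))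
        = u * Matrix.diagonal g * (star u * (Xᴴ * X) * u) * Matrix.diagonal g * star u := by
      noncomm_ring
    rw [h1, hdiag]
    rw [show u * Matrix.diagonal g * Matrix.diagonal (fun i => (lam i : ℂ)) * Matrix.diagonal g * star u
        = u * (Matrix.diagonal g * Matrix.diagonal (fun i => (lam i : ℂ)) * Matrix.diagonal g) * star u
        by noncomm_ring, hggg]
  refine ⟨W, ?_, ?_⟩
  · have h1 : (1 : Matrix (Fin d) (Fin d) ℂ) - W * Wᴴ
        = u * Matrix.diagonal (fun i => if lam i = 0 then (1:ℂ) else 0) * star u := by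
      rw [hWWH]
      have hone : (1 : Matrix (Fin d) (Fin d) ℂ) = u * 1 * star u := by
        rw [Matrix.mul_one, hu2]
      nth_rewrite 1 [hone]
      rw [← Matrix.sub_mul, ← Matrix.mul_sub]
      have h2 : (fun i => (1:ℂ) - p i) = (fun i => if lam i = 0 then (1:ℂ) else 0) := by
        funext i
        by_cases h0 : lam i = 0 <;> simp [hp, h0]
      rw [← Matrix.diagonal_one, Matrix.diagonal_sub, h2]
    rw [h1]
    have hpsd : (Matrix.diagonal (fun i => if lam i = 0 then (1:ℂ) else 0)).PosSemidef := by
      rw [Matrix.posSemidef_diagonal_iff]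
      intro i
      by_cases h0 : lam i = 0 <;> simp [h0]
    exact hpsd.mul_mul_conjTranspose_same u
  · rw [hWX, Matrix.trace_mul_cycle, hu1, one_mul, Matrix.trace_diagonal, traceNorm_eq_sum]
    simp [Complex.re_sum]
    rfl
/-- Core inequality: for a contraction `W` (i.e. `1 - W Wᴴ` PSD), `|Re Tr(W Y)| ≤ ‖Y‖₁`. -/
lemma re_trace_mul_le_traceNorm (W Y : Matrix (Fin d) (Fin d) ℂ)
    (hW : (1 - W * Wᴴ).PosSemidef) : |(Matrix.trace (W * Y)).re| ≤ traceNorm Y := by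
  set hH := Matrix.posSemidef_conjTranspose_mul_self Y with hHdef
  set u : Matrix (Fin d) (Fin d) ℂ := (hH.1.eigenvectorUnitary : Matrix (Fin d) (Fin d) ℂ) with hu
  have hu1 : star u * u = 1 := Matrix.UnitaryGroup.star_mul_self _
  have hu2 : u * star u = 1 := Matrix.mem_unitaryGroup_iff.mp hH.1.eigenvectorUnitary.2
  set lam := hH.1.eigenvalues with hlam
  have hlamnn : ∀ i, 0 ≤ lam i := fun i => hH.eigenvalues_nonneg i
  have hdiag : star u * (Yᴴ * Y) * u = Matrix.diagonal (fun i => (lam i : ℂ)) := by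
    have := hH.1.conjStarAlgAut_star_eigenvectorUnitary
    rw [Unitary.conjStarAlgAut_star_apply] at this
    exact this
  set M := star u * W with hM
  set N := Y * u with hN
  have hsu : (star u)ᴴ = u := by simp [Matrix.star_eq_conjTranspose]
  have htr : Matrix.trace (W * Y) = Matrix.trace (M * N) := by
    have hMN : M * N = star u * (W * Y) * u := by rw [hM, hN]; noncomm_ring
    rw [hMN, Matrix.trace_mul_cycle, hu2, one_mul]
  -- column norms of N
  have hNcol : ∀ i, (∑ k, ‖N k i‖ ^ 2) = lam i := by
    intro i
    have h1 : ((Nᴴ * N) i i) = (lam i : ℂ) := by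
      have : Nᴴ * N = star u * (Yᴴ * Y) * u := by
        rw [hN, Matrix.conjTranspose_mul]
        noncomm_ring
      rw [this, hdiag, Matrix.diagonal_apply_eq]
    have h2 : ((Nᴴ * N) i i) = (∑ k, ‖N k i‖ ^ 2 : ℝ) := by
      push_cast
      rw [Matrix.mul_apply]
      congr 1; funext k
      rw [Matrix.conjTranspose_apply]
      rw [Complex.star_def, ← Complex.normSq_eq_conj_mul_self, Complex.normSq_eq_norm_sq]
      norm_cast
    have := h2.symm.trans h1
    exact_mod_cast this
  -- row norms of M
  have hMrow : ∀ i, (∑ k, ‖M i k‖ ^ 2) ≤ 1 := by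
    intro i
    have hpsd : (star u * (1 - W * Wᴴ) * u).PosSemidef := by
      have := hW.mul_mul_conjTranspose_same (star u)
      rwa [hsu] at this
    have h0 := psd_diag_re_nonneg hpsd i
    have hMM : M * Mᴴ = star u * (W * Wᴴ) * u := by
      rw [hM, Matrix.conjTranspose_mul, hsu]
      noncomm_ring
    have hexp : star u * (1 - W * Wᴴ) * u = 1 - M * Mᴴ := by
      rw [hMM, Matrix.mul_sub, Matrix.sub_mul, Matrix.mul_one, hu1]
    rw [hexp] at h0
    have h1 : ((1 - M * Mᴴ) i i).re = 1 - ((M * Mᴴ) i i).re := by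
      simp [Matrix.sub_apply, Matrix.one_apply_eq]
    have h2 : ((M * Mᴴ) i i).re = ∑ k, ‖M i k‖ ^ 2 := by
      rw [Matrix.mul_apply, Complex.re_sum]
      congr 1; funext k
      rw [Matrix.conjTranspose_apply, Complex.star_def, Complex.mul_conj]
      simp [Complex.normSq_eq_norm_sq]
      norm_cast
    rw [h1, h2] at h0
    linarith
  -- per-index bound
  have hterm : ∀ i, ‖(M * N) i i‖ ≤ Real.sqrt (lam i) := by
    intro i
    set a : EuclideanSpace ℂ (Fin d) := WithLp.toLp 2 (fun k => (starRingEnd ℂ) (M i k)) with ha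
    set b : EuclideanSpace ℂ (Fin d) := WithLp.toLp 2 (fun k => N k i) with hb
    have hinner : inner ℂ a b = (M * N) i i := by
      rw [Matrix.mul_apply, PiLp.inner_apply]
      congr 1; funext k
      simp [ha, hb, mul_comm]
    have hcs := norm_inner_le_norm (𝕜 := ℂ) a b
    rw [hinner] at hcs
    have hna : ‖a‖ ≤ 1 := by
      have : ‖a‖ ^ 2 ≤ 1 := by
        rw [EuclideanSpace.norm_eq]
        rw [Real.sq_sqrt (by positivity)]
        have : ∀ k, ‖a k‖ = ‖M i k‖ := by intro k; simp [ha]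
        calc ∑ k, ‖a k‖ ^ 2 = ∑ k, ‖M i k‖ ^ 2 := by simp [this]
        _ ≤ 1 := hMrow i
      nlinarith [norm_nonneg a]
    have hnb : ‖b‖ = Real.sqrt (lam i) := by
      rw [EuclideanSpace.norm_eq]
      congr 1
      exact hNcol i
    calc ‖(M * N) i i‖ ≤ ‖a‖ * ‖b‖ := hcs
    _ ≤ 1 * Real.sqrt (lam i) := by
        rw [hnb]; exact mul_le_mul_of_nonneg_right hna (Real.sqrt_nonneg _)
    _ = Real.sqrt (lam i) := one_mul _
  calc |(Matrix.trace (W * Y)).re| ≤ ‖Matrix.trace (W * Y)‖ := Complex.abs_re_le_norm _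
  _ = ‖Matrix.trace (M * N)‖ := by rw [htr]
  _ = ‖∑ i, (M * N) i i‖ := by rw [Matrix.trace]; rfl
  _ ≤ ∑ i, ‖(M * N) i i‖ := norm_sum_le _ _
  _ ≤ ∑ i, Real.sqrt (lam i) := Finset.sum_le_sum fun i _ => hterm i
  _ = traceNorm Y := (traceNorm_eq_sum Y).symm

lemma traceNorm_conj_le (V A : Matrix (Fin d) (Fin d) ℂ) (h1 : V * star V = 1)
    (h2 : star V * V = 1) : traceNorm (V * A * star V) ≤ traceNorm A := by
  obtain ⟨W, hW, hWeq⟩ := exists_contraction_polar (V * A * star V)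
  have hsV : (star V)ᴴ = V := by simp [Matrix.star_eq_conjTranspose]
  have hcyc : Matrix.trace (W * (V * A * star V)) = Matrix.trace ((star V * W * V) * A) := by
    rw [show W * (V * A * star V) = (W * V * A) * star V by noncomm_ring,
      Matrix.trace_mul_comm]
    congr 1
    noncomm_ring
  have hWH : (star V * W * V)ᴴ = star V * Wᴴ * V := by
    simp only [Matrix.conjTranspose_mul, hsV, Matrix.star_eq_conjTranspose,
      Matrix.conjTranspose_conjTranspose]
    noncomm_ring
  have hW' : (1 - (star V * W * V) * (star V * W * V)ᴴ).PosSemidef := by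
    rw [hWH]
    have key : (star V * W * V) * (star V * Wᴴ * V) = star V * (W * Wᴴ) * V := by
      calc (star V * W * V) * (star V * Wᴴ * V)
          = star V * (W * (V * star V) * Wᴴ) * V := by noncomm_ring
        _ = star V * (W * Wᴴ) * V := by rw [h1, Matrix.mul_one]
    have hexp : (1 : Matrix (Fin d) (Fin d) ℂ) - (star V * W * V) * (star V * Wᴴ * V)
        = star V * (1 - W * Wᴴ) * (star V)ᴴ := by
      rw [key, hsV, Matrix.mul_sub, Matrix.sub_mul, Matrix.mul_one, h2]
    rw [hexp]
    exact hW.mul_mul_conjTranspose_same (star V)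
  calc traceNorm (V * A * star V) = (Matrix.trace ((star V * W * V) * A)).re := by
        rw [← hWeq, hcyc]
    _ ≤ |(Matrix.trace ((star V * W * V) * A)).re| := le_abs_self _
    _ ≤ traceNorm A := re_trace_mul_le_traceNorm _ _ hW'

lemma traceNorm_conj (V A : Matrix (Fin d) (Fin d) ℂ) (h1 : V * star V = 1)
    (h2 : star V * V = 1) : traceNorm (V * A * star V) = traceNorm A := by
  refine le_antisymm (traceNorm_conj_le V A h1 h2) ?_
  have h1' : star V * star (star V) = 1 := by rw [star_star]; exact h2
  have h2' : star (star V) * star V = 1 := by rw [star_star]; exact h1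
  have := traceNorm_conj_le (star V) (V * A * star V) h1' h2'
  have heq : star V * (V * A * star V) * star (star V) = A := by
    rw [star_star]
    calc star V * (V * A * star V) * V = (star V * V) * A * (star V * V) := by noncomm_ring
    _ = A := by rw [h2, one_mul, Matrix.mul_one]
  rwa [heq] at this

end TN


/-- schedule-independent annealing speed limit, Eq. (10) of the paper.
For the annealing generator `L_t(A) = −i[(H₀ + f(t)H₁), A] + D(A)` and the
schedule-independent generator `L(A) = −i[H₀, A] + D(A)`: if `ρ` solves `ρ' = L_t ρ` on
`[0,T]` with `‖ρ(t)‖₁ = 1`, the initial state `ρ₀ = ρ(0)` commutes with the control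
Hamiltonian `H₁`, and `C > 0` satisfies `‖L(A)‖₁ ≤ C‖A‖₁` for all `A`, then
`T ≥ ‖ρ(T) − ρ₀‖₁ / C`. -/
theorem annealing_speed_limit (d : ℕ) (hd : 1 ≤ d) (T : ℝ) (hT : 0 < T)
    (H₀ H₁ : Matrix (Fin d) (Fin d) ℂ) (hH₀ : H₀.IsHermitian) (hH₁ : H₁.IsHermitian)
    (f : ℝ → ℝ) (hf : Continuous f)
    (D : Matrix (Fin d) (Fin d) ℂ →ₗ[ℂ] Matrix (Fin d) (Fin d) ℂ)
    (ρ : ℝ → Matrix (Fin d) (Fin d) ℂ)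
    (hρ : ∀ t ∈ Set.Icc (0 : ℝ) T, HasDerivAt ρ
      ((-Complex.I) • ((H₀ + (f t : ℂ) • H₁) * ρ t - ρ t * (H₀ + (f t : ℂ) • H₁))
        + D (ρ t)) t)
    (hρnorm : ∀ t ∈ Set.Icc (0 : ℝ) T, traceNorm (ρ t) = 1)
    (hcomm : ρ 0 * H₁ = H₁ * ρ 0)
    (C : ℝ) (hC : 0 < C)
    (hCbound : ∀ A : Matrix (Fin d) (Fin d) ℂ,
      traceNorm ((-Complex.I) • (H₀ * A - A * H₀) + D A) ≤ C * traceNorm A) :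
    traceNorm (ρ T - ρ 0) / C ≤ T := by
  classical
  have hH1 : H₁ᴴ = H₁ := hH₁
  set M : Matrix (Fin d) (Fin d) ℂ := Complex.I • H₁ with hMdef
  set g : ℝ → ℝ := fun t => ∫ s in (0:ℝ)..t, f s with hgdef
  have hgderiv : ∀ t : ℝ, HasDerivAt g (f t) t := fun t =>
    (hf.integral_hasStrictDerivAt 0 t).hasDerivAt
  have hg0 : g 0 = 0 := by simp [hgdef]
  set V : ℝ → Matrix (Fin d) (Fin d) ℂ := fun t => NormedSpace.exp (g t • M) with hVdef
  set Wm : ℝ → Matrix (Fin d) (Fin d) ℂ := fun t => NormedSpace.exp ((-g t) • M) with hWmdef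
  have hcomm1 : ∀ (a b : ℝ), Commute (a • M) (b • M) := fun a b =>
    ((Commute.refl M).smul_left a).smul_right b
  have hVW : ∀ t, V t * Wm t = 1 := by
    intro t
    rw [hVdef, hWmdef]
    simp only
    erw [← NormedSpace.exp_add_of_commute (hcomm1 (g t) (-g t)), ← add_smul]
    simp [NormedSpace.exp_zero]
  have hWV : ∀ t, Wm t * V t = 1 := by
    intro t
    rw [hVdef, hWmdef]
    simp only
    erw [← NormedSpace.exp_add_of_commute (hcomm1 (-g t) (g t)), ← add_smul]
    simp [NormedSpace.exp_zero]
  have hstarM : star M = -M := by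
    rw [hMdef, star_smul]
    simp only [Matrix.star_eq_conjTranspose, hH1, Complex.star_def, Complex.conj_I, neg_smul]
  have hstarV : ∀ t, star (V t) = Wm t := by
    intro t
    rw [hVdef, hWmdef]
    simp only
    rw [NormedSpace.star_exp, star_smul, star_trivial, hstarM, smul_neg, ← neg_smul]
  have hVd : ∀ t, HasDerivAt V (f t • (V t * M)) t := by
    intro t
    exact HasDerivAt.scomp (x := t) (h := g) (hasDerivAt_exp_smul_const (𝕂 := ℝ) M (g t)) (hgderiv t)
  have hWd : ∀ t, HasDerivAt Wm ((-f t) • (Wm t * M)) t := by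
    intro t
    exact HasDerivAt.scomp (x := t) (h := fun u => -g u) (hasDerivAt_exp_smul_const (𝕂 := ℝ) M (-g t)) ((hgderiv t).neg)
  set Lm : ℝ → Matrix (Fin d) (Fin d) ℂ :=
    fun t => (-Complex.I) • (H₀ * ρ t - ρ t * H₀) + D (ρ t) with hLmdef
  set σ : ℝ → Matrix (Fin d) (Fin d) ℂ := fun t => V t * ρ t * Wm t with hσdef
  have hH₁M : Commute H₁ M := by rw [hMdef]; exact (Commute.refl H₁).smul_right _
  have hH₁Wm : ∀ t, Wm t * H₁ = H₁ * Wm t := by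
    intro t
    have : Commute H₁ (Wm t) := by
      rw [hWmdef]
      exact ((hH₁M.smul_right (-g t)).exp_right)
    exact this.eq.symm
  have hrs : ∀ (r : ℝ) (A : Matrix (Fin d) (Fin d) ℂ), r • A = (r : ℂ) • A := fun r A =>
    RCLike.real_smul_eq_coe_smul (K := ℂ) r A
  have hσd : ∀ t ∈ Set.Icc (0:ℝ) T, HasDerivAt σ (V t * Lm t * Wm t) t := by
    intro t ht
    have hprod := ((hVd t).mul (hρ t ht)).mul (hWd t)
    convert hprod using 1
    · rfl
    · rfl
    · rfl
    · rfl
    rw [hLmdef]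
    simp only [hMdef, hrs, smul_mul_assoc, mul_smul_comm, Matrix.mul_add, Matrix.add_mul,
      Matrix.mul_sub, Matrix.sub_mul, smul_add, smul_sub, smul_smul, Matrix.mul_assoc, hH₁Wm, Pi.mul_apply]
    module
  obtain ⟨Wp, hWp, hWpeq⟩ := exists_contraction_polar (σ T - σ 0)
  set φ : Matrix (Fin d) (Fin d) ℂ →ₗ[ℝ] ℝ := {
    toFun := fun A => (Matrix.trace (Wp * A)).re
    map_add' := fun A B => by simp [Matrix.mul_add]
    map_smul' := fun r A => by
      show (Matrix.trace (Wp * (r • A))).re = r • (Matrix.trace (Wp * A)).re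
      rw [mul_smul_comm, Matrix.trace_smul]
      simp [Complex.real_smul] } with hφdef
  have hφlip : ∀ X : Matrix (Fin d) (Fin d) ℂ, ‖φ X‖ ≤ traceNorm X := by
    intro X
    rw [hφdef]
    exact re_trace_mul_le_traceNorm Wp X hWp
  have hunit : ∀ t (A : Matrix (Fin d) (Fin d) ℂ),
      traceNorm (V t * A * Wm t) = traceNorm A := by
    intro t A
    rw [← hstarV t]
    exact traceNorm_conj (V t) A (by rw [hstarV t]; exact hVW t) (by rw [hstarV t]; exact hWV t)
  have hbound : ∀ t ∈ Set.Icc (0:ℝ) T, ‖φ (V t * Lm t * Wm t)‖ ≤ C := by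
    intro t ht
    calc ‖φ (V t * Lm t * Wm t)‖ ≤ traceNorm (V t * Lm t * Wm t) := hφlip _
    _ = traceNorm (Lm t) := hunit t _
    _ ≤ C * traceNorm (ρ t) := hCbound (ρ t)
    _ = C := by rw [hρnorm t ht, mul_one]
  set F : ℝ → ℝ := fun t => φ (σ t) with hFdef
  have hFd : ∀ t ∈ Set.Icc (0:ℝ) T,
      HasDerivWithinAt F (φ (V t * Lm t * Wm t)) (Set.Icc 0 T) t := by
    intro t ht
    exact ((φ.toContinuousLinearMap.hasFDerivAt).comp_hasDerivAt t (hσd t ht)).hasDerivWithinAt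
  have hmvt := norm_image_sub_le_of_norm_deriv_le_segment' hFd
    (fun x hx => hbound x (Set.Ico_subset_Icc_self hx)) T (Set.right_mem_Icc.mpr hT.le)
  have hσ0 : σ 0 = ρ 0 := by
    rw [hσdef]
    simp only [hg0, hVdef, hWmdef, neg_zero, zero_smul, NormedSpace.exp_zero, one_mul, mul_one]
  have hρ0V : V T * ρ 0 = ρ 0 * V T := by
    have hc : Commute (ρ 0) (V T) := by
      rw [hVdef]
      refine Commute.exp_right ?_
      refine Commute.smul_right ?_ _
      rw [hMdef]
      exact Commute.smul_right hcomm _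
    exact hc.eq.symm
  have hΔ : σ T - σ 0 = V T * (ρ T - ρ 0) * Wm T := by
    rw [hσ0, hσdef]
    simp only
    rw [Matrix.mul_sub, Matrix.sub_mul, hρ0V]
    rw [Matrix.mul_assoc (ρ 0) (V T) (Wm T), hVW T, Matrix.mul_one]
  have htn : traceNorm (σ T - σ 0) = traceNorm (ρ T - ρ 0) := by
    rw [hΔ]; exact hunit T _
  have hFT : F T - F 0 = traceNorm (σ T - σ 0) := by
    rw [hFdef]
    simp only
    rw [← map_sub φ]
    rw [hφdef]
    exact hWpeq
  rw [div_le_iff₀ hC]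
  calc traceNorm (ρ T - ρ 0) = traceNorm (σ T - σ 0) := htn.symm
  _ = F T - F 0 := hFT.symm
  _ ≤ ‖F T - F 0‖ := le_abs_self _
  _ ≤ C * (T - 0) := hmvt
  _ = T * C := by ring
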